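/- arXiv:math/0202241 — 3 statements merged into one kernel-verified Lean document; each statement's English description precedes it below -/
import Mathlib

section
/- Let p and q be real polynomials with positive leading coefficients and deg p ≤ deg q. Then the proper rational function p/q is strictly positive real if and only if the polynomial λ p(s)² + (1−λ) q(s)² is Hurwitz stable for every λ ∈ [0,1]. -/
open Polynomial

/-- A real polynomial is Hurwitz stable if all its complex roots have negative real part. -/
def Hurwitz (p : ℝ[X]) : Prop :=
  ∀ z : ℂ, Polynomial.aeval z p = 0 → z.re < 0

/-- The (proper) real rational function `p/q` is strictly positive real: `q` is Hurwitz
stable and `Re (p(jω)/q(jω)) > 0` for all real `ω`. -/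
def SPR (p q : ℝ[X]) : Prop :=
  Hurwitz q ∧
    ∀ ω : ℝ, 0 < ((Polynomial.aeval ((ω : ℂ) * Complex.I) p) /
      (Polynomial.aeval ((ω : ℂ) * Complex.I) q)).re

open Complex Filter Set Bornology Topology

lemma aeval_eq_evalmap (p : ℝ[X]) (z : ℂ) :
    aeval z p = (p.map (algebraMap ℝ ℂ)).eval z := by
  rw [aeval_def, eval_map]

lemma aeval_ofReal' (p : ℝ[X]) (x : ℝ) :
    aeval (x : ℂ) p = ((p.eval x : ℝ) : ℂ) := by
  rw [aeval_def, ← Complex.coe_algebraMap, Polynomial.eval₂_at_apply]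

lemma hurwitz_no_nonneg_real_root {p : ℝ[X]} (hH : Hurwitz p) {x : ℝ} (hx : 0 ≤ x) :
    p.eval x ≠ 0 := by
  intro h
  have := hH (x : ℂ) (by rw [aeval_ofReal', h]; simp)
  simp only [Complex.ofReal_re] at this
  linarith

lemma hurwitz_eval_zero_pos {p : ℝ[X]} (hH : Hurwitz p) (hl : 0 < p.leadingCoeff) :
    0 < p.eval 0 := by
  rcases eq_or_lt_of_le (Nat.zero_le p.natDegree) with h0 | h0
  · -- constant polynomial
    have : p = C (p.coeff 0) := p.eq_C_of_natDegree_eq_zero h0.symm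
    rw [this]; simp
    have := p.leadingCoeff; rw [Polynomial.leadingCoeff, ← h0] at hl; simpa using hl
  · have hdeg : 0 < p.degree := natDegree_pos_iff_degree_pos.mp h0
    have htop : Tendsto (fun x => p.eval x) atTop atTop :=
      p.tendsto_atTop_of_leadingCoeff_nonneg hdeg hl.le
    obtain ⟨x0, hx0⟩ := (htop.eventually_ge_atTop 1).and (eventually_ge_atTop 0) |>.exists
    by_contra hle
    push_neg at hle
    have : (0:ℝ) ∈ Set.Icc (p.eval 0) (p.eval x0) := ⟨hle, by linarith [hx0.1]⟩
    obtain ⟨c, hc, hceq⟩ := intermediate_value_Icc hx0.2 (p.continuousOn) this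
    exact hurwitz_no_nonneg_real_root hH hc.1 hceq

lemma hurwitz_map_ne {q : ℝ[X]} (hH : Hurwitz q) {z : ℂ} (hz : 0 ≤ z.re) :
    (q.map (algebraMap ℝ ℂ)).eval z ≠ 0 := by
  intro h
  have := hH z (by rw [aeval_def, ← eval_map]; exact h)
  linarith

lemma tendsto_eval_div_pow (r : ℂ[X]) (n : ℕ) (h : r.natDegree ≤ n) :
    Tendsto (fun z : ℂ => r.eval z / z ^ n) (cobounded ℂ) (𝓝 (r.coeff n)) := by
  have key : Tendsto (fun z : ℂ => ∑ i ∈ Finset.range (n + 1), r.coeff i * (z⁻¹) ^ (n - i))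
      (cobounded ℂ) (𝓝 (∑ i ∈ Finset.range (n + 1), r.coeff i * (0:ℂ) ^ (n - i))) := by
    refine tendsto_finset_sum _ fun i _ => ?_
    exact (tendsto_const_nhds.mul ((tendsto_inv₀_cobounded).pow _))
  have hsum : (∑ i ∈ Finset.range (n + 1), r.coeff i * (0:ℂ) ^ (n - i)) = r.coeff n := by
    rw [Finset.sum_eq_single n]
    · simp
    · intro i hi hne
      have : i < n := lt_of_le_of_ne (Nat.lt_succ_iff.mp (Finset.mem_range.mp hi)) hne
      rw [zero_pow (by omega), mul_zero]
    · intro h; exact absurd (Finset.self_mem_range_succ n) h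
  rw [hsum] at key
  refine key.congr' ?_
  filter_upwards [eventually_cobounded_le_norm 1] with z hz
  have hz0 : z ≠ 0 := by intro h; rw [h] at hz; simp at hz; linarith
  rw [Polynomial.eval_eq_sum_range' (Nat.lt_succ_of_le h), Finset.sum_div]
  refine Finset.sum_congr rfl fun i hi => ?_
  have hle : i ≤ n := Nat.lt_succ_iff.mp (Finset.mem_range.mp hi)
  rw [inv_pow, ← div_eq_mul_inv, mul_div_assoc]
  have hzz : z ^ n = z ^ i * z ^ (n - i) := by rw [← pow_add]; congr 1; omega
  rw [hzz]
  field_simp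

lemma tendsto_ratio (p q : ℝ[X]) (hq : 0 < q.leadingCoeff)
    (hdeg : p.natDegree ≤ q.natDegree) :
    Tendsto (fun z : ℂ => (p.map (algebraMap ℝ ℂ)).eval z / (q.map (algebraMap ℝ ℂ)).eval z)
      (cobounded ℂ)
      (𝓝 ((p.map (algebraMap ℝ ℂ)).coeff q.natDegree /
          (q.map (algebraMap ℝ ℂ)).coeff q.natDegree)) := by
  set n := q.natDegree
  have hinj := (algebraMap ℝ ℂ).injective
  have hP : (p.map (algebraMap ℝ ℂ)).natDegree ≤ n :=
    le_trans (le_of_eq (p.natDegree_map_eq_of_injective hinj)) hdeg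
  have hQ : (q.map (algebraMap ℝ ℂ)).natDegree ≤ n :=
    le_of_eq (q.natDegree_map_eq_of_injective hinj)
  have hQn : (q.map (algebraMap ℝ ℂ)).coeff n ≠ 0 := by
    rw [Polynomial.coeff_map, Complex.coe_algebraMap]
    exact_mod_cast hq.ne'
  have h1 := tendsto_eval_div_pow _ n hP
  have h2 := tendsto_eval_div_pow _ n hQ
  have := h1.div h2 hQn
  refine this.congr' ?_
  filter_upwards [eventually_cobounded_le_norm 1] with z hz
  have hz0 : (z : ℂ) ^ n ≠ 0 := by
    apply pow_ne_zero; intro h; rw [h] at hz; simp at hz; linarith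
  simp only [Pi.div_apply]
  rw [div_div_div_comm, div_self hz0, div_one]

lemma exists_bound (p q : ℝ[X]) (hq : 0 < q.leadingCoeff)
    (hdeg : p.natDegree ≤ q.natDegree) (hHq : Hurwitz q) :
    ∃ M : ℝ, ∀ z : ℂ, 0 ≤ z.re →
      ‖(p.map (algebraMap ℝ ℂ)).eval z / (q.map (algebraMap ℝ ℂ)).eval z‖ ≤ M := by
  set f : ℂ → ℂ := fun z =>
    (p.map (algebraMap ℝ ℂ)).eval z / (q.map (algebraMap ℝ ℂ)).eval z with hf
  obtain ⟨L, hL⟩ : ∃ L, Tendsto f (cobounded ℂ) (𝓝 L) := ⟨_, tendsto_ratio p q hq hdeg⟩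
  have hev : ∀ᶠ z : ℂ in cobounded ℂ, ‖f z‖ ≤ ‖L‖ + 1 := by
    filter_upwards [hL.norm.eventually_le_const (lt_add_one ‖L‖)] with z hz using hz
  rw [← comap_norm_atTop, Filter.eventually_comap] at hev
  rw [Filter.eventually_atTop] at hev
  obtain ⟨R, hR⟩ := hev
  have hK : IsCompact ({z : ℂ | 0 ≤ z.re} ∩ Metric.closedBall 0 R) := by
    refine Metric.isCompact_of_isClosed_isBounded ?_ ?_
    · exact (isClosed_le continuous_const Complex.continuous_re).inter Metric.isClosed_closedBall
    · exact (Metric.isBounded_closedBall).subset (Set.inter_subset_right)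
  have hcont : ContinuousOn f ({z : ℂ | 0 ≤ z.re} ∩ Metric.closedBall 0 R) := by
    apply ContinuousOn.div
    · exact (Polynomial.continuous _).continuousOn
    · exact (Polynomial.continuous _).continuousOn
    · intro z hz; exact hurwitz_map_ne hHq hz.1
  obtain ⟨C, hC⟩ := hK.exists_bound_of_continuousOn hcont
  refine ⟨max C (‖L‖ + 1), fun z hz => ?_⟩
  rcases le_or_gt ‖z‖ R with h | h
  · exact le_trans (hC z ⟨hz, by simpa using h⟩) (le_max_left _ _)
  · exact le_trans (hR ‖z‖ h.le z rfl) (le_max_right _ _)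

lemma re_pos_on_rhp (p q : ℝ[X]) (hp : 0 < p.leadingCoeff) (hq : 0 < q.leadingCoeff)
    (hdeg : p.natDegree ≤ q.natDegree) (hHq : Hurwitz q)
    (hax : ∀ ω : ℝ, 0 < ((aeval ((ω:ℂ)*Complex.I) p) / (aeval ((ω:ℂ)*Complex.I) q)).re)
    {z : ℂ} (hz : 0 ≤ z.re) :
    0 < ((p.map (algebraMap ℝ ℂ)).eval z / (q.map (algebraMap ℝ ℂ)).eval z).re := by
  set P := p.map (algebraMap ℝ ℂ) with hP
  set Q := q.map (algebraMap ℝ ℂ) with hQ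
  set f : ℂ → ℂ := fun w => P.eval w / Q.eval w with hfdef
  have hax' : ∀ ω : ℝ, 0 < (f ((ω:ℂ)*Complex.I)).re := by
    intro ω; have := hax ω
    rwa [aeval_eq_evalmap, aeval_eq_evalmap] at this
  have hne : ∀ w : ℂ, 0 ≤ w.re → Q.eval w ≠ 0 := fun w hw => hurwitz_map_ne hHq hw
  obtain ⟨M, hM⟩ := exists_bound p q hq hdeg hHq
  set g : ℂ → ℂ := fun w => Complex.exp (-(f w)) with hgdef
  have hgnorm : ∀ w, ‖g w‖ = Real.exp (-(f w).re) := by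
    intro w
    simp [hgdef, Complex.norm_exp]
  have hgbound : ∀ w : ℂ, 0 ≤ w.re → ‖g w‖ ≤ Real.exp M := by
    intro w hw
    rw [hgnorm]
    apply Real.exp_le_exp.mpr
    have h1 := abs_le.mp (Complex.abs_re_le_norm (f w))
    have h2 := hM w hw
    linarith [h1.1]
  have hfc : ContinuousOn f {w : ℂ | 0 ≤ w.re} := by
    exact ContinuousOn.div (P.continuous.continuousOn) (Q.continuous.continuousOn)
      (fun w hw => hne w hw)
  have hd : DiffContOnCl ℂ g {w : ℂ | 0 < w.re} := by
    constructor
    · apply DifferentiableOn.cexp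
      apply DifferentiableOn.neg
      exact DifferentiableOn.div (P.differentiable.differentiableOn)
        (Q.differentiable.differentiableOn) (fun w hw => hne w (le_of_lt hw))
    · rw [Complex.closure_setOf_lt_re]
      exact Complex.continuous_exp.comp_continuousOn hfc.neg
  have hRe0 : ∀ w : ℂ, 0 ≤ w.re → 0 ≤ (f w).re := by
    intro w hw
    have hPL : ‖g w‖ ≤ 1 := by
      apply PhragmenLindelof.right_half_plane_of_bounded_on_real hd ?_ ?_ ?_ hw
      · refine ⟨1, one_lt_two, 0, Asymptotics.IsBigO.of_bound (Real.exp M) ?_⟩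
        rw [eventually_inf_principal]
        refine Eventually.of_forall fun u hu => ?_
        have := hgbound u (le_of_lt hu)
        simpa using this
      · apply Filter.isBoundedUnder_of_eventually_le (a := Real.exp M)
        filter_upwards [eventually_ge_atTop (0:ℝ)] with x hx
        exact hgbound x (by simpa using hx)
      · intro x
        rw [hgnorm]
        have := hax' x
        rw [Real.exp_le_one_iff]
        linarith
    rw [hgnorm, Real.exp_le_one_iff] at hPL
    linarith
  rcases eq_or_lt_of_le hz with hz0 | hzpos
  · have hzz : z = (z.im : ℂ) * Complex.I := by
      apply Complex.ext <;> simp [← hz0]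
    rw [hzz]; exact hax' z.im
  by_contra hcon
  push_neg at hcon
  have hre0 : (f z).re = 0 := le_antisymm hcon (hRe0 z hz)
  have hfa : AnalyticAt ℂ f z := by
    apply AnalyticAt.div
    · exact P.differentiable.analyticAt z
    · exact Q.differentiable.analyticAt z
    · exact hne z hz
  rcases hfa.eventually_constant_or_nhds_le_map_nhds with hconst | hopen
  · -- f locally constant: P = C (f z) * Q, contradiction with leading coeffs
    have hQev : ∀ᶠ w in 𝓝 z, Q.eval w ≠ 0 :=
      (Q.continuous.continuousAt).eventually_ne (hne z hz)
    have hev : ∀ᶠ w in 𝓝 z, (P - Polynomial.C (f z) * Q).eval w = 0 := by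
      filter_upwards [hconst, hQev] with w h1 h2
      rw [hfdef] at h1
      simp only at h1
      rw [div_eq_iff h2] at h1
      simp [h1, hfdef]
    have hr0 : P - Polynomial.C (f z) * Q = 0 := by
      apply Polynomial.eq_zero_of_infinite_isRoot
      exact infinite_of_mem_nhds z hev
    have hPQ : P = Polynomial.C (f z) * Q := by
      rwa [sub_eq_zero] at hr0
    have hlead : (p.leadingCoeff : ℂ) = f z * (q.leadingCoeff : ℂ) := by
      have h1 : P.leadingCoeff = f z * Q.leadingCoeff := by
        rw [hPQ, Polynomial.leadingCoeff_mul, Polynomial.leadingCoeff_C]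
      rwa [hP, hQ, Polynomial.leadingCoeff_map_of_leadingCoeff_ne_zero,
        Polynomial.leadingCoeff_map_of_leadingCoeff_ne_zero] at h1
      · simpa using hq.ne'
      · simpa using hp.ne'
    have := congrArg Complex.re hlead
    simp [Complex.mul_re, hre0] at this
    rw [this] at hp
    simp at hp
  · have himg : f '' {w : ℂ | 0 < w.re} ∈ 𝓝 (f z) :=
      hopen (image_mem_map ((isOpen_lt continuous_const Complex.continuous_re).mem_nhds hzpos))
    obtain ⟨ε, hε, hball⟩ := Metric.mem_nhds_iff.mp himg
    have hmem : f z - ((ε/2 : ℝ) : ℂ) ∈ Metric.ball (f z) ε := by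
      rw [Metric.mem_ball, Complex.dist_eq]
      have : f z - ((ε/2 : ℝ) : ℂ) - f z = -((ε/2 : ℝ) : ℂ) := by ring
      rw [this]
      rw [norm_neg, Complex.norm_real, Real.norm_eq_abs, abs_of_pos (by linarith)]
      linarith
    obtain ⟨w, hw, hweq⟩ := hball hmem
    have h1 : (f w).re = -(ε/2) := by
      rw [hweq]
      simp [hre0]
    have h2 := hRe0 w (le_of_lt hw)
    rw [h1] at h2
    linarith

lemma aeval_combo (p q : ℝ[X]) (t : ℝ) (z : ℂ) :
    aeval z (Polynomial.C t * p ^ 2 + Polynomial.C (1 - t) * q ^ 2) =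
      ((t : ℂ)) * (aeval z p) ^ 2 + (((1 - t : ℝ)) : ℂ) * (aeval z q) ^ 2 := by
  simp [map_add, map_mul, map_pow, aeval_C]

/-- For real polynomials `p`, `q` with positive leading coefficients and `deg p ≤ deg q`,
`p/q` is strictly positive real iff `t p² + (1-t) q²` is Hurwitz stable for all `t ∈ [0,1]`. -/
theorem spr_iff_convex_combination_of_squares_hurwitz (p q : ℝ[X])
    (hp : 0 < p.leadingCoeff) (hq : 0 < q.leadingCoeff)
    (hdeg : p.natDegree ≤ q.natDegree) :
    SPR p q ↔
      ∀ t ∈ Set.Icc (0 : ℝ) 1,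
        Hurwitz (Polynomial.C t * p ^ 2 + Polynomial.C (1 - t) * q ^ 2) := by
  constructor
  · rintro ⟨hHq, hax⟩ t ht z hzroot
    by_contra hcon
    push_neg at hcon
    set A := aeval z p with hA
    set B := aeval z q with hB
    have hBne : B ≠ 0 := by
      intro h
      exact absurd (hHq z h) (not_lt.mpr hcon)
    have heq : (t : ℂ) * A ^ 2 + (((1 - t : ℝ)) : ℂ) * B ^ 2 = 0 := by
      rw [← aeval_combo]; exact hzroot
    set w : ℂ := A / B with hw
    have hwre : 0 < w.re := by
      have := re_pos_on_rhp p q hp hq hdeg hHq hax hcon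
      rwa [hw, hA, hB, aeval_eq_evalmap, aeval_eq_evalmap]
    have key : (t : ℂ) * w ^ 2 + (((1 - t : ℝ)) : ℂ) = 0 := by
      rw [hw]
      field_simp [hBne]
      push_cast at heq ⊢
      linear_combination heq
    have hre := congrArg Complex.re key
    have him := congrArg Complex.im key
    simp [Complex.mul_re, Complex.mul_im, pow_two, Complex.add_re, Complex.add_im] at hre him
    -- hre : t * (w.re*w.re - w.im*w.im) + (1 - t) = 0 (roughly)
    -- him : t * (w.re*w.im + w.im*w.re) = 0
    rcases eq_or_lt_of_le ht.1 with ht0 | ht0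
    · rw [← ht0] at hre
      simp at hre
    · have hy : w.im = 0 := by
        rcases him with h | h
        · exact absurd h (ne_of_gt ht0)
        · rcases mul_eq_zero.mp (by linarith : w.re * w.im = 0) with h' | h'
          · exact absurd h' (ne_of_gt hwre)
          · exact h'
      rw [hy] at hre
      nlinarith [ht.2, mul_pos ht0 (mul_pos hwre hwre)]
  · intro h
    have hHq : Hurwitz q := by
      intro z hz
      apply h 0 ⟨le_refl 0, zero_le_one⟩ z
      rw [aeval_combo, hz]
      push_cast
      ring
    have hHp : Hurwitz p := by
      intro z hz
      apply h 1 ⟨zero_le_one, le_refl 1⟩ z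
      rw [aeval_combo, hz]
      push_cast
      ring
    refine ⟨hHq, ?_⟩
    have hq0 : ∀ ω : ℝ, aeval ((ω:ℂ) * Complex.I) q ≠ 0 := by
      intro ω hzero
      have := hHq _ hzero
      simp at this
    set F : ℝ → ℝ := fun ω => ((aeval ((ω:ℂ) * Complex.I) p) /
      (aeval ((ω:ℂ) * Complex.I) q)).re with hF
    show ∀ ω : ℝ, 0 < F ω
    have hFcont : Continuous F := by
      rw [hF]
      apply Complex.continuous_re.comp
      apply Continuous.div
      · exact (Polynomial.continuous_aeval p).comp (continuous_ofReal.mul continuous_const)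
      · exact (Polynomial.continuous_aeval q).comp (continuous_ofReal.mul continuous_const)
      · intro ω; exact hq0 ω
    have hF0 : 0 < F 0 := by
      have h00 : ((0:ℝ):ℂ) * Complex.I = (((0:ℝ)):ℂ) := by simp
      rw [hF]
      simp only [h00, aeval_ofReal']
      rw [← Complex.ofReal_div, Complex.ofReal_re]
      exact div_pos (hurwitz_eval_zero_pos hHp hp) (hurwitz_eval_zero_pos hHq hq)
    have hFne : ∀ ω : ℝ, F ω ≠ 0 := by
      intro ω hFz
      set A := aeval ((ω:ℂ) * Complex.I) p with hA
      set B := aeval ((ω:ℂ) * Complex.I) q with hB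
      set w : ℂ := A / B with hw
      have hwre : w.re = 0 := hFz
      set y : ℝ := w.im with hy
      have hwy : w = (y : ℂ) * Complex.I := by
        apply Complex.ext <;> simp [hwre, hy]
      set t : ℝ := 1 / (1 + y^2) with htdef
      have hden : (0:ℝ) < 1 + y^2 := by positivity
      have ht : t ∈ Set.Icc (0:ℝ) 1 := by
        constructor
        · positivity
        · rw [htdef, div_le_one hden]; nlinarith [sq_nonneg y]
      have hAwB : A = w * B := by
        rw [hw, div_mul_cancel₀ _ (hq0 ω)]
      have hroot : aeval ((ω:ℂ) * Complex.I)
          (Polynomial.C t * p ^ 2 + Polynomial.C (1 - t) * q ^ 2) = 0 := by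
        rw [aeval_combo, ← hA, ← hB, hAwB, hwy]
        have h1t : ((1 - t : ℝ) : ℂ) = (t : ℂ) * (y:ℂ)^2 := by
          rw [← Complex.ofReal_pow, ← Complex.ofReal_mul, Complex.ofReal_inj, htdef]
          field_simp
          ring
        rw [h1t]
        ring_nf
        rw [Complex.I_sq]
        ring
      have := h t ht _ hroot
      simp at this
    by_contra hcon
    push_neg at hcon
    obtain ⟨ω₀, hω₀⟩ := hcon
    have hω₀' : F ω₀ < 0 := lt_of_le_of_ne hω₀ (hFne ω₀)
    rcases le_total ω₀ 0 with hle | hle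
    · obtain ⟨c, _, hc⟩ := intermediate_value_Icc hle hFcont.continuousOn
        ⟨hω₀'.le, hF0.le⟩
      exact hFne c hc
    · obtain ⟨c, _, hc⟩ := intermediate_value_Icc' hle hFcont.continuousOn
        ⟨hω₀'.le, hF0.le⟩
      exact hFne c hc
end

section
/- Let Γ_u and Γ_v be real interval polynomial families of orders n_u and n_v with n_u ≤ n_v, such that the lower endpoints of the leading-coefficient intervals of Γ_u and Γ_v are positive. Then every member p_u/p_v (p_u ∈ Γ_u, p_v ∈ Γ_v) of the interval transfer function family is strictly positive real if and only if the eight vertex transfer functions K_1^u/K_4^v, K_2^u/K_3^v, K_3^u/K_1^v, K_4^u/K_2^v, K_1^u/K_3^v, K_2^u/K_4^v, K_3^u/K_2^v, K_4^u/K_1^v are strictly positive real. -/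
open Polynomial

/-- The real interval polynomial family with coefficient bounds `lo`, `hi`. -/
def intervalFamily (lo hi : ℕ → ℝ) : Set ℝ[X] :=
  {p | ∀ i, p.coeff i ∈ Set.Icc (lo i) (hi i)}

/-- Kharitonov-type vertex polynomial: the `i`-th coefficient is `hi i` when
`i % 4 ∈ hiRes`, and `lo i` otherwise. -/
noncomputable def kpoly (n : ℕ) (lo hi : ℕ → ℝ) (hiRes : Finset ℕ) : ℝ[X] :=
  ∑ i ∈ Finset.range (n + 1),
    Polynomial.C (if i % 4 ∈ hiRes then hi i else lo i) * Polynomial.X ^ i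

/-- The residue sets selecting the four Kharitonov polynomials `K₁, K₂, K₃, K₄`. -/
def kRes : Fin 4 → Finset ℕ := ![{2, 3}, {0, 1}, {0, 3}, {1, 2}]

/-- The `i`-th Kharitonov polynomial (`i : Fin 4` ↦ `K_{i+1}`). -/
noncomputable def kvert (n : ℕ) (lo hi : ℕ → ℝ) (i : Fin 4) : ℝ[X] :=
  kpoly n lo hi (kRes i)

namespace IntervalSPR

open Filter Topology


lemma fA {x y z w : ℝ} (h : 0 < x*y + z*w) : 0 < (-x)*(-y) + z*w := by rwa [neg_mul_neg]
lemma fB {x y z w : ℝ} (h : 0 < x*y + z*w) : 0 < x*y + (-z)*(-w) := by rwa [neg_mul_neg]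
lemma fC {x y z w : ℝ} (h : 0 < x*y + z*w) : 0 < (-x)*(-y) + (-z)*(-w) := by
  rwa [neg_mul_neg, neg_mul_neg]
lemma f2 {x y z w : ℝ} (h : 0 < x*y + z*w) : 0 < z*w + x*y := by linarith
lemma f4 {x y z w : ℝ} (h : 0 < x*y + z*w) : 0 < z*w + (-x)*(-y) := by
  rw [neg_mul_neg]; linarith

lemma cornerA (a1 a2 b1 b2 c1 c2 d1 d2 : ℝ)
 (hA : a1 ≤ a2) (hB : b1 ≤ b2) (hC : c1 ≤ c2) (hD : d1 ≤ d2)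
 (h1 : 0 < a1*c1 + b1*d2) (h2 : 0 < a1*c2 + b1*d1) (h3 : 0 < a1*c1 + b2*d1)
 (h4 : 0 < a1*c2 + b2*d2) (h5 : 0 < a2*c1 + b1*d1) (h6 : 0 < a2*c2 + b1*d2)
 (h7 : 0 < a2*c1 + b2*d2) (h8 : 0 < a2*c2 + b2*d1) :
 0 < a2*c1 + b1*d2 := by
  rcases le_or_gt 0 c1 with hs | hs
  · nlinarith
  rcases le_or_gt a2 0 with ht | ht
  · nlinarith
  rcases le_or_gt d2 0 with hu | hu
  · nlinarith
  rcases le_or_gt 0 b1 with hv | hv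
  · nlinarith
  exfalso
  have ha1 : a1 < 0 := by nlinarith
  have hd1 : d1 < 0 := by nlinarith
  have hc2 : 0 < c2 := by nlinarith
  have hb2 : 0 < b2 := by nlinarith
  have s1 : (-b1)*d2 < a1*c1 := by nlinarith
  have s2 : (-a1)*c2 < b1*d1 := by nlinarith
  have s3 : a2*(-c1) < b2*d2 := by nlinarith
  have s4 : b2*(-d1) < a2*c2 := by nlinarith
  have q1 : ((-b1)*d2) * ((-a1)*c2) < (a1*c1) * (b1*d1) :=
    mul_lt_mul'' s1 s2 (mul_nonneg (by linarith) (by linarith)) (mul_nonneg (by linarith) (by linarith))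
  have q2 : (a2*(-c1)) * (b2*(-d1)) < (b2*d2) * (a2*c2) :=
    mul_lt_mul'' s3 s4 (mul_nonneg (by linarith) (by linarith)) (mul_nonneg (by linarith) (by linarith))
  have hP : 0 < a1*b1 := mul_pos_of_neg_of_neg ha1 hv
  have hQ : 0 < a2*b2 := mul_pos ht hb2
  have q1' : a1*b1*(c2*d2) < a1*b1*(c1*d1) := by
    calc a1*b1*(c2*d2) = ((-b1)*d2) * ((-a1)*c2) := by ring
      _ < (a1*c1) * (b1*d1) := q1
      _ = a1*b1*(c1*d1) := by ring
  have q2' : a2*b2*(c1*d1) < a2*b2*(c2*d2) := by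
    calc a2*b2*(c1*d1) = (a2*(-c1)) * (b2*(-d1)) := by ring
      _ < (b2*d2) * (a2*c2) := q2
      _ = a2*b2*(c2*d2) := by ring
  have e1 := lt_of_mul_lt_mul_left q1' (le_of_lt hP)
  have e2 := lt_of_mul_lt_mul_left q2' (le_of_lt hQ)
  linarith

lemma cornerB (a1 a2 b1 b2 c1 c2 d1 d2 : ℝ)
 (hA : a1 ≤ a2) (hB : b1 ≤ b2) (hC : c1 ≤ c2) (hD : d1 ≤ d2)
 (h1 : 0 < a1*c1 + b1*d2) (h2 : 0 < a1*c2 + b1*d1) (h3 : 0 < a1*c1 + b2*d1)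
 (h4 : 0 < a1*c2 + b2*d2) (h5 : 0 < a2*c1 + b1*d1) (h6 : 0 < a2*c2 + b1*d2)
 (h7 : 0 < a2*c1 + b2*d2) (h8 : 0 < a2*c2 + b2*d1) :
 0 < a1*c1 + b1*d1 := by
  rcases le_or_gt b1 0 with hs | hs
  · nlinarith
  rcases le_or_gt d1 0 with ht | ht
  · nlinarith
  rcases le_or_gt c1 0 with hu | hu
  · nlinarith
  rcases le_or_gt a1 0 with hv | hv
  · nlinarith
  positivity

lemma rect_pos (a1 a2 b1 b2 c1 c2 d1 d2 a b c d : ℝ)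
 (h1 : 0 < a1*c1 + b1*d2) (h2 : 0 < a1*c2 + b1*d1) (h3 : 0 < a1*c1 + b2*d1)
 (h4 : 0 < a1*c2 + b2*d2) (h5 : 0 < a2*c1 + b1*d1) (h6 : 0 < a2*c2 + b1*d2)
 (h7 : 0 < a2*c1 + b2*d2) (h8 : 0 < a2*c2 + b2*d1)
 (ha1 : a1 ≤ a) (ha2 : a ≤ a2) (hb1 : b1 ≤ b) (hb2 : b ≤ b2)
 (hc1 : c1 ≤ c) (hc2 : c ≤ c2) (hd1 : d1 ≤ d) (hd2 : d ≤ d2) :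
 0 < a*c + b*d := by
  have hA : a1 ≤ a2 := le_trans ha1 ha2
  have hB : b1 ≤ b2 := le_trans hb1 hb2
  have hC : c1 ≤ c2 := le_trans hc1 hc2
  have hD : d1 ≤ d2 := le_trans hd1 hd2
  have g1 : 0 < a1*c1 + b1*d1 := cornerB a1 a2 b1 b2 c1 c2 d1 d2 hA hB hC hD h1 h2 h3 h4 h5 h6 h7 h8
  have g2 : 0 < a1*c1 + b2*d2 := by
    have := cornerB a1 a2 (-b2) (-b1) c1 c2 (-d2) (-d1) hA (by linarith) hC (by linarith)
      (fB h3) (fB h4) (fB h1) (fB h2) (fB h7) (fB h8) (fB h5) (fB h6)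
    rwa [neg_mul_neg] at this
  have g7 : 0 < a2*c2 + b1*d1 := by
    have := cornerB (-a2) (-a1) b1 b2 (-c2) (-c1) d1 d2 (by linarith) hB (by linarith) hD
      (fA h6) (fA h5) (fA h8) (fA h7) (fA h2) (fA h1) (fA h4) (fA h3)
    rwa [neg_mul_neg] at this
  have g8 : 0 < a2*c2 + b2*d2 := by
    have := cornerB (-a2) (-a1) (-b2) (-b1) (-c2) (-c1) (-d2) (-d1)
      (by linarith) (by linarith) (by linarith) (by linarith)
      (fC h8) (fC h7) (fC h6) (fC h5) (fC h4) (fC h3) (fC h2) (fC h1)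
    rwa [neg_mul_neg, neg_mul_neg] at this
  have g5 : 0 < a2*c1 + b1*d2 := cornerA a1 a2 b1 b2 c1 c2 d1 d2 hA hB hC hD h1 h2 h3 h4 h5 h6 h7 h8
  have g4 : 0 < a1*c2 + b2*d1 := by
    have := cornerA b1 b2 a1 a2 d1 d2 c1 c2 hB hA hD hC
      (f2 h2) (f2 h1) (f2 h5) (f2 h6) (f2 h3) (f2 h4) (f2 h8) (f2 h7)
    linarith
  have g3 : 0 < a1*c2 + b1*d2 := by
    have := cornerA (-a2) (-a1) b1 b2 (-c2) (-c1) d1 d2 (by linarith) hB (by linarith) hD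
      (fA h6) (fA h5) (fA h8) (fA h7) (fA h2) (fA h1) (fA h4) (fA h3)
    rw [neg_mul_neg] at this
    linarith
  have g6 : 0 < a2*c1 + b2*d1 := by
    have := cornerA b1 b2 (-a2) (-a1) d1 d2 (-c2) (-c1) hB (by linarith) hD (by linarith)
      (f4 h5) (f4 h6) (f4 h2) (f4 h1) (f4 h8) (f4 h7) (f4 h3) (f4 h4)
    rw [neg_mul_neg] at this
    linarith
  obtain ⟨x, hx, hxle⟩ : ∃ x, (x = a1 ∨ x = a2) ∧ x*c ≤ a*c := by
    rcases le_or_gt 0 c with h | h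
    · exact ⟨a1, Or.inl rfl, mul_le_mul_of_nonneg_right ha1 h⟩
    · exact ⟨a2, Or.inr rfl, mul_le_mul_of_nonpos_right ha2 h.le⟩
  obtain ⟨y, hy, hyle⟩ : ∃ y, (y = b1 ∨ y = b2) ∧ y*d ≤ b*d := by
    rcases le_or_gt 0 d with h | h
    · exact ⟨b1, Or.inl rfl, mul_le_mul_of_nonneg_right hb1 h⟩
    · exact ⟨b2, Or.inr rfl, mul_le_mul_of_nonpos_right hb2 h.le⟩
  obtain ⟨u, hu, hule⟩ : ∃ u, (u = c1 ∨ u = c2) ∧ x*u ≤ x*c := by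
    rcases le_or_gt 0 x with h | h
    · exact ⟨c1, Or.inl rfl, mul_le_mul_of_nonneg_left hc1 h⟩
    · exact ⟨c2, Or.inr rfl, mul_le_mul_of_nonpos_left hc2 h.le⟩
  obtain ⟨v, hv, hvle⟩ : ∃ v, (v = d1 ∨ v = d2) ∧ y*v ≤ y*d := by
    rcases le_or_gt 0 y with h | h
    · exact ⟨d1, Or.inl rfl, mul_le_mul_of_nonneg_left hd1 h⟩
    · exact ⟨d2, Or.inr rfl, mul_le_mul_of_nonpos_left hd2 h.le⟩
  have hcorner : 0 < x*u + y*v := by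
    rcases hx with rfl | rfl <;> rcases hy with rfl | rfl <;>
      rcases hu with rfl | rfl <;> rcases hv with rfl | rfl <;>
      linarith [h1, h2, h3, h4, h5, h6, h7, h8, g1, g2, g3, g4, g5, g6, g7, g8]
  linarith




lemma norm_multiset_prod_c (s : Multiset ℂ) : ‖s.prod‖ = (s.map fun x => ‖x‖).prod := by
  induction s using Multiset.induction_on with
  | empty => simp
  | cons a t ih => simp [norm_mul, ih]

lemma multiset_exists_min {α : Type*} (f : α → ℝ) (s : Multiset α) (hs : s ≠ 0) :
    ∃ a ∈ s, ∀ b ∈ s, f a ≤ f b := by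
  induction s using Multiset.induction_on with
  | empty => exact absurd rfl hs
  | cons a t ih =>
    rcases eq_or_ne t 0 with rfl | ht
    · exact ⟨a, by simp, by simp⟩
    · obtain ⟨m, hm, hmin⟩ := ih ht
      rcases le_total (f a) (f m) with h | h
      · refine ⟨a, Multiset.mem_cons_self _ _, fun b hb => ?_⟩
        rcases Multiset.mem_cons.1 hb with rfl | hb
        · exact le_rfl
        · exact le_trans h (hmin b hb)
      · refine ⟨m, Multiset.mem_cons_of_mem hm, fun b hb => ?_⟩
        rcases Multiset.mem_cons.1 hb with rfl | hb
        · exact h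
        · exact hmin b hb

lemma pow_card_le_prod_r (s : Multiset ℝ) (a : ℝ) (ha : 0 ≤ a) (h : ∀ x ∈ s, a ≤ x) :
    a ^ Multiset.card s ≤ s.prod := by
  induction s using Multiset.induction_on with
  | empty => simp
  | cons x t ih =>
    have hx : a ≤ x := h x (Multiset.mem_cons_self _ _)
    have ht : ∀ y ∈ t, a ≤ y := fun y hy => h y (Multiset.mem_cons_of_mem hy)
    simp only [Multiset.card_cons, Multiset.prod_cons, pow_succ]
    rw [mul_comm (a ^ Multiset.card t) a]
    exact mul_le_mul hx (ih ht) (pow_nonneg ha _) (le_trans ha hx)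

lemma exists_root_near (P : ℂ[X]) (hdeg : 0 < P.natDegree) (z : ℂ) :
    ∃ r ∈ P.roots, ‖z - r‖ ^ P.natDegree ≤ ‖P.eval z‖ / ‖P.leadingCoeff‖ := by
  have hP : P ≠ 0 := fun h => by simp [h] at hdeg
  have hsplit : P.Splits := IsAlgClosed.splits P
  have hfac : P = C P.leadingCoeff * (P.roots.map fun a => X - C a).prod :=
    hsplit.eq_prod_roots
  have hcard : Multiset.card P.roots = P.natDegree := by
    have := hsplit.natDegree_eq_card_roots
    simpa using this.symm
  have hne : P.roots ≠ 0 := by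
    intro h
    rw [h] at hcard
    simp at hcard
    omega
  obtain ⟨r, hr, hmin⟩ := multiset_exists_min (fun r => ‖z - r‖) P.roots hne
  refine ⟨r, hr, ?_⟩
  have heval : P.eval z = P.leadingCoeff * (P.roots.map fun a => z - a).prod := by
    conv_lhs => rw [hfac]
    rw [eval_mul, eval_C, eval_multiset_prod]
    simp [Multiset.map_map]
  have hnorm : ‖P.eval z‖ = ‖P.leadingCoeff‖ * (P.roots.map fun a => ‖z - a‖).prod := by
    rw [heval, norm_mul]
    congr 1
    rw [norm_multiset_prod_c, Multiset.map_map]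
    rfl
  have hpow : ‖z - r‖ ^ P.natDegree ≤ (P.roots.map fun a => ‖z - a‖).prod := by
    rw [← hcard]
    have hc2 : Multiset.card (P.roots.map fun a => ‖z - a‖) = Multiset.card P.roots := by simp
    rw [← hc2]
    refine pow_card_le_prod_r _ _ (norm_nonneg _) ?_
    intro x hx
    obtain ⟨a, ha, rfl⟩ := Multiset.mem_map.1 hx
    exact hmin a ha
  have hlc : 0 < ‖P.leadingCoeff‖ := by
    simp [norm_pos_iff, Polynomial.leadingCoeff_ne_zero, hP]
  rw [le_div_iff₀ hlc, hnorm, mul_comm]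
  exact mul_le_mul_of_nonneg_left hpow (le_of_lt hlc)

lemma root_bound (n : ℕ) (hn : 0 < n) (p : ℝ[X]) (hd : p.natDegree ≤ n) (c M : ℝ)
    (hc : 0 < c) (hlead : c ≤ |p.coeff n|)
    (hM : ∑ i ∈ Finset.range n, |p.coeff i| ≤ M)
    (z : ℂ) (hz : Polynomial.aeval z p = 0) : ‖z‖ ≤ max 1 (M / c) := by
  rcases le_or_gt ‖z‖ 1 with h1 | h1
  · exact le_trans h1 (le_max_left _ _)
  have hzpos : (0:ℝ) < ‖z‖ := by linarith
  have hsum : ∑ i ∈ Finset.range (n+1), p.coeff i • z ^ i = 0 := by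
    rw [← Polynomial.aeval_eq_sum_range' (Nat.lt_succ_of_le hd), hz]
  rw [Finset.sum_range_succ] at hsum
  have heq : p.coeff n • z ^ n = -∑ i ∈ Finset.range n, p.coeff i • z ^ i := by
    linear_combination hsum
  have hnorm : |p.coeff n| * ‖z‖ ^ n ≤ M * ‖z‖ ^ (n - 1) := by
    have h2 : ‖p.coeff n • z ^ n‖ = |p.coeff n| * ‖z‖ ^ n := by
      rw [norm_smul, norm_pow, Real.norm_eq_abs]
    have h3 : ‖p.coeff n • z ^ n‖ ≤ ∑ i ∈ Finset.range n, |p.coeff i| * ‖z‖ ^ i := by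
      rw [heq, norm_neg]
      refine le_trans (norm_sum_le _ _) ?_
      refine Finset.sum_le_sum fun i _ => ?_
      rw [norm_smul, norm_pow, Real.norm_eq_abs]
    have h4 : ∑ i ∈ Finset.range n, |p.coeff i| * ‖z‖ ^ i ≤
        ∑ i ∈ Finset.range n, |p.coeff i| * ‖z‖ ^ (n-1) := by
      refine Finset.sum_le_sum fun i hi => ?_
      refine mul_le_mul_of_nonneg_left ?_ (abs_nonneg _)
      exact pow_le_pow_right₀ (by linarith) (by have := Finset.mem_range.1 hi; omega)
    rw [← Finset.sum_mul] at h4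
    calc |p.coeff n| * ‖z‖ ^ n = ‖p.coeff n • z ^ n‖ := h2.symm
      _ ≤ ∑ i ∈ Finset.range n, |p.coeff i| * ‖z‖ ^ i := h3
      _ ≤ (∑ i ∈ Finset.range n, |p.coeff i|) * ‖z‖ ^ (n-1) := h4
      _ ≤ M * ‖z‖ ^ (n-1) := mul_le_mul_of_nonneg_right hM (by positivity)
  have hzn : ‖z‖ ^ n = ‖z‖ * ‖z‖ ^ (n - 1) := by
    conv_lhs => rw [show n = 1 + (n - 1) by omega]
    rw [pow_add, pow_one]
  have hp1 : (0:ℝ) < ‖z‖ ^ (n-1) := by positivity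
  have hkey : c * ‖z‖ * ‖z‖^(n-1) ≤ M * ‖z‖^(n-1) := by
    calc c * ‖z‖ * ‖z‖^(n-1) = c * ‖z‖^n := by rw [hzn]; ring
      _ ≤ |p.coeff n| * ‖z‖^n := mul_le_mul_of_nonneg_right hlead (by positivity)
      _ ≤ M * ‖z‖^(n-1) := hnorm
  have h5 : c * ‖z‖ ≤ M := le_of_mul_le_mul_right hkey hp1
  have h6 : ‖z‖ ≤ M / c := (le_div_iff₀ hc).2 (by linarith)
  exact le_trans h6 (le_max_right _ _)

lemma hurwitz_path (n : ℕ) (q0 q1 : ℝ[X])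
    (hd0 : q0.natDegree ≤ n) (hd1 : q1.natDegree ≤ n)
    (hl0 : 0 < q0.coeff n) (hl1 : 0 < q1.coeff n)
    (h0 : Hurwitz q0)
    (hax : ∀ t ∈ Set.Icc (0:ℝ) 1, ∀ ω : ℝ,
        Polynomial.aeval ((ω:ℂ)*Complex.I) ((1-t) • q0 + t • q1) ≠ 0) :
    Hurwitz q1 := by
  set Q : ℝ → ℝ[X] := fun t => (1-t) • q0 + t • q1 with hQ
  rcases Nat.eq_zero_or_pos n with rfl | hn
  · -- degree 0 case
    intro z hz
    exfalso
    have hq1 : q1 = C (q1.coeff 0) := eq_C_of_natDegree_le_zero hd1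
    rw [hq1] at hz
    simp only [aeval_C] at hz
    have : (q1.coeff 0 : ℂ) = 0 := hz
    rw [Complex.ofReal_eq_zero] at this
    linarith
  have hcoeff : ∀ t i, (Q t).coeff i = (1-t) * q0.coeff i + t * q1.coeff i := by
    intro t i
    simp [hQ, Polynomial.coeff_smul, smul_eq_mul]
  have hdeg : ∀ t, (Q t).natDegree ≤ n := by
    intro t
    refine le_trans (natDegree_add_le _ _) (max_le ?_ ?_) <;>
      exact le_trans (natDegree_smul_le _ _) (by assumption)
  set c : ℝ := min (q0.coeff n) (q1.coeff n) with hcdef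
  have hc : 0 < c := lt_min hl0 hl1
  have hlead : ∀ t ∈ Set.Icc (0:ℝ) 1, c ≤ (Q t).coeff n := by
    intro t ht
    rw [hcoeff]
    obtain ⟨ht0, ht1⟩ := ht
    have h1 : c ≤ q0.coeff n := min_le_left _ _
    have h2 : c ≤ q1.coeff n := min_le_right _ _
    nlinarith
  have hdegQ : ∀ t ∈ Set.Icc (0:ℝ) 1, (Q t).natDegree = n := by
    intro t ht
    refine le_antisymm (hdeg t) (le_natDegree_of_ne_zero ?_)
    have := hlead t ht
    exact ne_of_gt (lt_of_lt_of_le hc this)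
  have heval : ∀ t (z : ℂ), Polynomial.aeval z (Q t) =
      (1-(t:ℂ)) * Polynomial.aeval z q0 + (t:ℂ) * Polynomial.aeval z q1 := by
    intro t z
    simp [hQ, map_add, map_smul, Complex.real_smul, Complex.ofReal_sub, Complex.ofReal_one]
  set M : ℝ := ∑ i ∈ Finset.range n, (|q0.coeff i| + |q1.coeff i|) with hMdef
  have hM : ∀ t ∈ Set.Icc (0:ℝ) 1, ∑ i ∈ Finset.range n, |(Q t).coeff i| ≤ M := by
    intro t ht
    refine Finset.sum_le_sum fun i _ => ?_
    rw [hcoeff]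
    obtain ⟨ht0, ht1⟩ := ht
    calc |(1-t) * q0.coeff i + t * q1.coeff i| ≤ |(1-t) * q0.coeff i| + |t * q1.coeff i| :=
          abs_add_le _ _
      _ = (1-t) * |q0.coeff i| + t * |q1.coeff i| := by
          rw [abs_mul, abs_mul, abs_of_nonneg (by linarith : (0:ℝ) ≤ 1 - t), abs_of_nonneg ht0]
      _ ≤ |q0.coeff i| + |q1.coeff i| := by nlinarith [abs_nonneg (q0.coeff i), abs_nonneg (q1.coeff i)]
  -- roots of Q t over ℂ
  have hroot_re : ∀ t ∈ Set.Icc (0:ℝ) 1, Hurwitz (Q t) → ∀ r : ℂ,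
      r ∈ ((Q t).map (algebraMap ℝ ℂ)).roots → r.re < 0 := by
    intro t ht hH r hr
    have h1 := (mem_roots'.1 hr).2
    rw [IsRoot, eval_map, ← aeval_def] at h1
    exact hH r h1
  -- T is sequentially closed
  have hTseq : IsSeqClosed {t : ℝ | t ∈ Set.Icc (0:ℝ) 1 ∧ Hurwitz (Q t)} := by
    intro x t hx hlim
    have htIcc : t ∈ Set.Icc (0:ℝ) 1 :=
      isClosed_Icc.isSeqClosed (fun k => (hx k).1) hlim
    refine ⟨htIcc, ?_⟩
    intro z hz
    have hzre : z.re ≠ 0 := by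
      intro h
      have hzeq : z = (z.im : ℂ) * Complex.I := by
        apply Complex.ext <;> simp [h]
      exact hax t htIcc z.im (by rw [← hzeq]; exact hz)
    by_contra hcon
    push_neg at hcon
    have hzre' : 0 < z.re := lt_of_le_of_ne hcon (Ne.symm hzre)
    -- evaluation tends to 0
    have hev : Tendsto (fun k => Polynomial.aeval z (Q (x k))) atTop (𝓝 0) := by
      have hcont : Continuous fun s : ℝ =>
          (1-(s:ℂ)) * Polynomial.aeval z q0 + (s:ℂ) * Polynomial.aeval z q1 :=
        ((continuous_const.sub Complex.continuous_ofReal).mul continuous_const).add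
          (Complex.continuous_ofReal.mul continuous_const)
      have := (hcont.tendsto t).comp hlim
      simp only [Function.comp_def] at this
      have h0' : (1-(t:ℂ)) * Polynomial.aeval z q0 + (t:ℂ) * Polynomial.aeval z q1 = 0 := by
        rw [← heval]; exact hz
      rw [h0'] at this
      convert this using 2
      exact (heval _ _)
    have hnormev : Tendsto (fun k => ‖Polynomial.aeval z (Q (x k))‖ / c) atTop (𝓝 0) := by
      have := (hev.norm).div_const c
      simpa using this
    have hev_small : ∀ᶠ k in atTop, ‖Polynomial.aeval z (Q (x k))‖ / c < z.re ^ n := by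
      have hpos : (0:ℝ) < z.re ^ n := by positivity
      exact hnormev.eventually_lt_const hpos
    obtain ⟨k, hk⟩ := hev_small.exists
    -- apply root proximity to Q (x k)
    set P : ℂ[X] := (Q (x k)).map (algebraMap ℝ ℂ) with hPdef
    have hdegP : P.natDegree = n := by
      rw [hPdef, natDegree_map_eq_of_injective (algebraMap ℝ ℂ).injective]
      exact hdegQ _ (hx k).1
    have hdegP' : 0 < P.natDegree := by omega
    obtain ⟨r, hrmem, hrle⟩ := exists_root_near P hdegP' z
    have hlcP : P.leadingCoeff = ((Q (x k)).coeff n : ℂ) := by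
      rw [hPdef, leadingCoeff, natDegree_map_eq_of_injective (algebraMap ℝ ℂ).injective,
        coeff_map, hdegQ _ (hx k).1]
      rfl
    have hlcnorm : c ≤ ‖P.leadingCoeff‖ := by
      rw [hlcP, Complex.norm_real, Real.norm_eq_abs,
        abs_of_pos (lt_of_lt_of_le hc (hlead _ (hx k).1))]
      exact hlead _ (hx k).1
    have hevP : P.eval z = Polynomial.aeval z (Q (x k)) := by
      rw [hPdef, eval_map, ← aeval_def]
    have hchain : ‖z - r‖ ^ n ≤ ‖Polynomial.aeval z (Q (x k))‖ / c := by
      rw [← hdegP, ← hevP]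
      refine le_trans hrle ?_
      refine div_le_div_of_nonneg_left (norm_nonneg _) hc ?_ |>.trans le_rfl
      exact hlcnorm
    have hlt : ‖z - r‖ ^ n < z.re ^ n := lt_of_le_of_lt hchain hk
    have hltre : ‖z - r‖ < z.re :=
      (pow_lt_pow_iff_left₀ (norm_nonneg _) (le_of_lt hzre') (by omega)).1 hlt
    have hrre : r.re < 0 := hroot_re _ (hx k).1 (hx k).2 r hrmem
    have : z.re - r.re ≤ ‖z - r‖ := by
      have h1 : |(z - r).re| ≤ ‖z - r‖ := Complex.abs_re_le_norm _
      rw [Complex.sub_re] at h1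
      exact le_trans (le_abs_self _) h1
    linarith
  -- complement is sequentially closed
  have hCseq : IsSeqClosed {t : ℝ | t ∈ Set.Icc (0:ℝ) 1 ∧ ¬ Hurwitz (Q t)} := by
    intro x t hx hlim
    have htIcc : t ∈ Set.Icc (0:ℝ) 1 :=
      isClosed_Icc.isSeqClosed (fun k => (hx k).1) hlim
    refine ⟨htIcc, ?_⟩
    -- extract bad roots
    have hbad : ∀ k, ∃ z : ℂ, Polynomial.aeval z (Q (x k)) = 0 ∧ 0 ≤ z.re := by
      intro k
      have := (hx k).2
      rw [Hurwitz] at this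
      push_neg at this
      obtain ⟨z, hz1, hz2⟩ := this
      exact ⟨z, hz1, hz2⟩
    choose zs hzs1 hzs2 using hbad
    set R : ℝ := max 1 (M / c) with hRdef
    have hbound : ∀ k, zs k ∈ Metric.closedBall (0:ℂ) R := by
      intro k
      rw [Metric.mem_closedBall, dist_zero_right]
      refine root_bound n hn (Q (x k)) (hdeg _) c M hc ?_ (hM _ (hx k).1) _ (hzs1 k)
      rw [abs_of_pos (lt_of_lt_of_le hc (hlead _ (hx k).1))]
      exact hlead _ (hx k).1
    obtain ⟨zlim, _, φ, hφ, hzconv⟩ :=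
      tendsto_subseq_of_bounded Metric.isBounded_closedBall hbound
    intro hH
    have hre : 0 ≤ zlim.re :=
      ge_of_tendsto' ((Complex.continuous_re.tendsto _).comp hzconv) (fun k => hzs2 _)
    have hg : Continuous fun p : ℝ × ℂ =>
        (1-(p.1:ℂ)) * Polynomial.aeval p.2 q0 + (p.1:ℂ) * Polynomial.aeval p.2 q1 := by
      refine Continuous.add (Continuous.mul ?_ ?_) (Continuous.mul ?_ ?_)
      · exact continuous_const.sub (Complex.continuous_ofReal.comp continuous_fst)
      · exact (Polynomial.continuous_aeval q0).comp continuous_snd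
      · exact Complex.continuous_ofReal.comp continuous_fst
      · exact (Polynomial.continuous_aeval q1).comp continuous_snd
    have hseq : Tendsto (fun k => (x (φ k), zs (φ k))) atTop (𝓝 (t, zlim)) :=
      ((hlim.comp hφ.tendsto_atTop)).prodMk_nhds hzconv
    have hzero : ∀ k, (1-((x (φ k)):ℂ)) * Polynomial.aeval (zs (φ k)) q0 +
        ((x (φ k)):ℂ) * Polynomial.aeval (zs (φ k)) q1 = 0 := by
      intro k
      rw [← heval]
      exact hzs1 _
    have hlim0 : Tendsto (fun k => (1-((x (φ k)):ℂ)) * Polynomial.aeval (zs (φ k)) q0 +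
        ((x (φ k)):ℂ) * Polynomial.aeval (zs (φ k)) q1) atTop
        (𝓝 ((1-(t:ℂ)) * Polynomial.aeval zlim q0 + (t:ℂ) * Polynomial.aeval zlim q1)) := by
      have h := (hg.tendsto (t, zlim)).comp hseq
      simpa [Function.comp_def] using h
    have hvz : (1-(t:ℂ)) * Polynomial.aeval zlim q0 + (t:ℂ) * Polynomial.aeval zlim q1 = 0 := by
      refine tendsto_nhds_unique hlim0 ?_
      simp only [hzero]
      exact tendsto_const_nhds
    have hval : Polynomial.aeval zlim (Q t) = 0 := by rw [heval]; exact hvz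
    exact absurd (hH zlim hval) (not_lt.2 hre)
  -- conclude by a connectedness (inf) argument
  by_contra hq1
  have hQ1 : Q 1 = q1 := by simp [hQ]
  have hQzero : Q 0 = q0 := by simp [hQ]
  have hCne : Set.Nonempty {t : ℝ | t ∈ Set.Icc (0:ℝ) 1 ∧ ¬ Hurwitz (Q t)} :=
    ⟨1, ⟨by norm_num, by rwa [hQ1]⟩⟩
  have hCbdd : BddBelow {t : ℝ | t ∈ Set.Icc (0:ℝ) 1 ∧ ¬ Hurwitz (Q t)} :=
    ⟨0, fun u hu => hu.1.1⟩
  have hsC : sInf {t : ℝ | t ∈ Set.Icc (0:ℝ) 1 ∧ ¬ Hurwitz (Q t)} ∈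
      {t : ℝ | t ∈ Set.Icc (0:ℝ) 1 ∧ ¬ Hurwitz (Q t)} :=
    hCseq.isClosed.csInf_mem hCne hCbdd
  set s := sInf {t : ℝ | t ∈ Set.Icc (0:ℝ) 1 ∧ ¬ Hurwitz (Q t)} with hsdef
  have hs0 : 0 < s := by
    rcases eq_or_lt_of_le hsC.1.1 with h | h
    · exfalso
      apply hsC.2
      rw [← h, hQzero]
      exact h0
    · exact h
  have hyT : ∀ k : ℕ, (s - s/(k+2)) ∈ {t : ℝ | t ∈ Set.Icc (0:ℝ) 1 ∧ Hurwitz (Q t)} := by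
    intro k
    have hk2 : (1:ℝ) ≤ (k:ℝ) + 2 := by
      have : (0:ℝ) ≤ (k:ℝ) := Nat.cast_nonneg _
      linarith
    have hpos : 0 < s/((k:ℝ)+2) := div_pos hs0 (by positivity)
    have hle : s/((k:ℝ)+2) ≤ s := div_le_self hs0.le hk2
    have hIcc : s - s/(k+2) ∈ Set.Icc (0:ℝ) 1 := by
      constructor
      · linarith
      · have := hsC.1.2
        linarith
    refine ⟨hIcc, ?_⟩
    have hlt : s - s/((k:ℝ)+2) < sInf {t : ℝ | t ∈ Set.Icc (0:ℝ) 1 ∧ ¬ Hurwitz (Q t)} := by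
      rw [← hsdef]; linarith
    have hnot := notMem_of_lt_csInf hlt hCbdd
    by_contra hcon
    exact hnot ⟨hIcc, hcon⟩
  have hdiv : Tendsto (fun k : ℕ => s/((k:ℝ)+2)) atTop (𝓝 0) :=
    Tendsto.div_atTop tendsto_const_nhds
      (tendsto_atTop_add_const_right atTop 2 tendsto_natCast_atTop_atTop)
  have hytend : Tendsto (fun k : ℕ => s - s/((k:ℝ)+2)) atTop (𝓝 s) := by
    have h := Filter.Tendsto.sub (tendsto_const_nhds (x := s) (f := atTop)) hdiv
    simpa using h
  have hsT := hTseq hyT hytend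
  exact hsC.2 hsT.2





lemma coeff_kpoly (n : ℕ) (lo hi : ℕ → ℝ) (S : Finset ℕ) (i : ℕ) :
    (kpoly n lo hi S).coeff i =
      if i ≤ n then (if i % 4 ∈ S then hi i else lo i) else 0 := by
  rw [kpoly, Polynomial.finset_sum_coeff]
  simp only [Polynomial.coeff_C_mul, Polynomial.coeff_X_pow, mul_ite, mul_one, mul_zero]
  rw [Finset.sum_ite_eq (Finset.range (n+1)) i]
  simp [Nat.lt_succ_iff]

lemma kpoly_natDegree_le (n : ℕ) (lo hi : ℕ → ℝ) (S : Finset ℕ) :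
    (kpoly n lo hi S).natDegree ≤ n := by
  rw [Polynomial.natDegree_le_iff_coeff_eq_zero]
  intro N hN
  rw [coeff_kpoly]
  simp [Nat.not_le.2 hN]

lemma kpoly_mem (n : ℕ) (lo hi : ℕ → ℝ) (S : Finset ℕ)
    (hle : ∀ i, lo i ≤ hi i) (hb : ∀ i, n < i → lo i = 0 ∧ hi i = 0) :
    kpoly n lo hi S ∈ intervalFamily lo hi := by
  intro i
  rw [coeff_kpoly]
  rcases le_or_gt i n with h | h
  · rw [if_pos h]
    split
    · exact ⟨hle i, le_rfl⟩
    · exact ⟨le_rfl, hle i⟩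
  · rw [if_neg (Nat.not_le.2 h)]
    obtain ⟨h1, h2⟩ := hb i h
    rw [h1, h2]
    exact ⟨le_rfl, le_rfl⟩

lemma mem_natDegree_le (n : ℕ) (lo hi : ℕ → ℝ) (p : ℝ[X])
    (hp : p ∈ intervalFamily lo hi) (hb : ∀ i, n < i → lo i = 0 ∧ hi i = 0) :
    p.natDegree ≤ n := by
  rw [Polynomial.natDegree_le_iff_coeff_eq_zero]
  intro N hN
  obtain ⟨h1, h2⟩ := hb N hN
  have := hp N
  rw [h1, h2] at this
  exact le_antisymm this.2 this.1

lemma aeval_re (n : ℕ) (p : ℝ[X]) (hd : p.natDegree ≤ n) (z : ℂ) :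
    (Polynomial.aeval z p).re = ∑ i ∈ Finset.range (n+1), p.coeff i * (z^i).re := by
  rw [Polynomial.aeval_eq_sum_range' (Nat.lt_succ_of_le hd), Complex.re_sum]
  refine Finset.sum_congr rfl fun i _ => ?_
  rw [Complex.smul_re]
  rfl

lemma aeval_im (n : ℕ) (p : ℝ[X]) (hd : p.natDegree ≤ n) (z : ℂ) :
    (Polynomial.aeval z p).im = ∑ i ∈ Finset.range (n+1), p.coeff i * (z^i).im := by
  rw [Polynomial.aeval_eq_sum_range' (Nat.lt_succ_of_le hd), Complex.im_sum]
  refine Finset.sum_congr rfl fun i _ => ?_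
  rw [Complex.smul_im]
  rfl

lemma omegaI_pow (ω : ℝ) (i : ℕ) :
    ((ω:ℂ) * Complex.I)^i = ((ω^i : ℝ) : ℂ) * Complex.I ^ (i % 4) := by
  rw [mul_pow, ← Complex.ofReal_pow]
  congr 1
  conv_lhs => rw [← Nat.div_add_mod i 4]
  rw [pow_add, pow_mul, Complex.I_pow_four, one_pow, one_mul]

lemma pow_re0 (ω : ℝ) {i : ℕ} (h : i % 4 = 0) : (((ω:ℂ) * Complex.I)^i).re = ω^i := by
  rw [omegaI_pow, h]; simp [← Complex.ofReal_pow]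
lemma pow_im0 (ω : ℝ) {i : ℕ} (h : i % 4 = 0) : (((ω:ℂ) * Complex.I)^i).im = 0 := by
  rw [omegaI_pow, h]; simp [← Complex.ofReal_pow]
lemma pow_re1 (ω : ℝ) {i : ℕ} (h : i % 4 = 1) : (((ω:ℂ) * Complex.I)^i).re = 0 := by
  rw [omegaI_pow, h]; simp [← Complex.ofReal_pow]
lemma pow_im1 (ω : ℝ) {i : ℕ} (h : i % 4 = 1) : (((ω:ℂ) * Complex.I)^i).im = ω^i := by
  rw [omegaI_pow, h]; simp [← Complex.ofReal_pow]
lemma pow_re2 (ω : ℝ) {i : ℕ} (h : i % 4 = 2) : (((ω:ℂ) * Complex.I)^i).re = -ω^i := by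
  rw [omegaI_pow, h]; simp [Complex.I_sq, ← Complex.ofReal_pow]
lemma pow_im2 (ω : ℝ) {i : ℕ} (h : i % 4 = 2) : (((ω:ℂ) * Complex.I)^i).im = 0 := by
  rw [omegaI_pow, h]; simp [Complex.I_sq, ← Complex.ofReal_pow]
lemma pow_re3 (ω : ℝ) {i : ℕ} (h : i % 4 = 3) : (((ω:ℂ) * Complex.I)^i).re = 0 := by
  rw [omegaI_pow, h]
  have h3 : Complex.I ^ 3 = -Complex.I := by
    rw [pow_succ, Complex.I_sq]; ring
  simp [h3, ← Complex.ofReal_pow]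
lemma pow_im3 (ω : ℝ) {i : ℕ} (h : i % 4 = 3) : (((ω:ℂ) * Complex.I)^i).im = -ω^i := by
  rw [omegaI_pow, h]
  have h3 : Complex.I ^ 3 = -Complex.I := by
    rw [pow_succ, Complex.I_sq]; ring
  simp [h3, ← Complex.ofReal_pow]

lemma sum_re_le (n : ℕ) (ω : ℝ) (hω : 0 ≤ ω) (f g : ℕ → ℝ)
    (h0 : ∀ i, i % 4 = 0 → f i ≤ g i) (h2 : ∀ i, i % 4 = 2 → g i ≤ f i) :
    ∑ i ∈ Finset.range (n+1), f i * (((ω:ℂ) * Complex.I)^i).re ≤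
      ∑ i ∈ Finset.range (n+1), g i * (((ω:ℂ) * Complex.I)^i).re := by
  refine Finset.sum_le_sum fun i _ => ?_
  have h4 : i % 4 = 0 ∨ i % 4 = 1 ∨ i % 4 = 2 ∨ i % 4 = 3 := by omega
  rcases h4 with h | h | h | h
  · rw [pow_re0 ω h]
    exact mul_le_mul_of_nonneg_right (h0 i h) (pow_nonneg hω i)
  · rw [pow_re1 ω h]; simp
  · rw [pow_re2 ω h]
    refine mul_le_mul_of_nonpos_right (h2 i h) ?_
    simp [pow_nonneg hω i]
  · rw [pow_re3 ω h]; simp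

lemma sum_im_le (n : ℕ) (ω : ℝ) (hω : 0 ≤ ω) (f g : ℕ → ℝ)
    (h1 : ∀ i, i % 4 = 1 → f i ≤ g i) (h3 : ∀ i, i % 4 = 3 → g i ≤ f i) :
    ∑ i ∈ Finset.range (n+1), f i * (((ω:ℂ) * Complex.I)^i).im ≤
      ∑ i ∈ Finset.range (n+1), g i * (((ω:ℂ) * Complex.I)^i).im := by
  refine Finset.sum_le_sum fun i _ => ?_
  have h4 : i % 4 = 0 ∨ i % 4 = 1 ∨ i % 4 = 2 ∨ i % 4 = 3 := by omega
  rcases h4 with h | h | h | h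
  · rw [pow_im0 ω h]; simp
  · rw [pow_im1 ω h]
    exact mul_le_mul_of_nonneg_right (h1 i h) (pow_nonneg hω i)
  · rw [pow_im2 ω h]; simp
  · rw [pow_im3 ω h]
    refine mul_le_mul_of_nonpos_right (h3 i h) ?_
    simp [pow_nonneg hω i]

lemma sum_re_eq (n : ℕ) (ω : ℝ) (f g : ℕ → ℝ)
    (h02 : ∀ i, i % 4 = 0 ∨ i % 4 = 2 → f i = g i) :
    ∑ i ∈ Finset.range (n+1), f i * (((ω:ℂ) * Complex.I)^i).re =
      ∑ i ∈ Finset.range (n+1), g i * (((ω:ℂ) * Complex.I)^i).re := by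
  refine Finset.sum_congr rfl fun i _ => ?_
  have h4 : i % 4 = 0 ∨ i % 4 = 1 ∨ i % 4 = 2 ∨ i % 4 = 3 := by omega
  rcases h4 with h | h | h | h
  · rw [h02 i (Or.inl h)]
  · rw [pow_re1 ω h]; simp
  · rw [h02 i (Or.inr h)]
  · rw [pow_re3 ω h]; simp

lemma sum_im_eq (n : ℕ) (ω : ℝ) (f g : ℕ → ℝ)
    (h13 : ∀ i, i % 4 = 1 ∨ i % 4 = 3 → f i = g i) :
    ∑ i ∈ Finset.range (n+1), f i * (((ω:ℂ) * Complex.I)^i).im =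
      ∑ i ∈ Finset.range (n+1), g i * (((ω:ℂ) * Complex.I)^i).im := by
  refine Finset.sum_congr rfl fun i _ => ?_
  have h4 : i % 4 = 0 ∨ i % 4 = 1 ∨ i % 4 = 2 ∨ i % 4 = 3 := by omega
  rcases h4 with h | h | h | h
  · rw [pow_im0 ω h]; simp
  · rw [h13 i (Or.inl h)]
  · rw [pow_im2 ω h]; simp
  · rw [h13 i (Or.inr h)]

lemma aeval_kpoly_re (n : ℕ) (lo hi : ℕ → ℝ) (S : Finset ℕ) (z : ℂ) :
    (Polynomial.aeval z (kpoly n lo hi S)).re =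
      ∑ i ∈ Finset.range (n+1), (if i % 4 ∈ S then hi i else lo i) * (z^i).re := by
  rw [aeval_re n _ (kpoly_natDegree_le n lo hi S)]
  refine Finset.sum_congr rfl fun i hi' => ?_
  rw [coeff_kpoly, if_pos (Nat.lt_succ_iff.1 (Finset.mem_range.1 hi'))]

lemma aeval_kpoly_im (n : ℕ) (lo hi : ℕ → ℝ) (S : Finset ℕ) (z : ℂ) :
    (Polynomial.aeval z (kpoly n lo hi S)).im =
      ∑ i ∈ Finset.range (n+1), (if i % 4 ∈ S then hi i else lo i) * (z^i).im := by
  rw [aeval_im n _ (kpoly_natDegree_le n lo hi S)]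
  refine Finset.sum_congr rfl fun i hi' => ?_
  rw [coeff_kpoly, if_pos (Nat.lt_succ_iff.1 (Finset.mem_range.1 hi'))]

lemma kpoly_re_eq (n : ℕ) (lo hi : ℕ → ℝ) (S T : Finset ℕ) (ω : ℝ)
    (h0 : 0 ∈ S ↔ 0 ∈ T) (h2 : 2 ∈ S ↔ 2 ∈ T) :
    (Polynomial.aeval ((ω:ℂ)*Complex.I) (kpoly n lo hi S)).re =
      (Polynomial.aeval ((ω:ℂ)*Complex.I) (kpoly n lo hi T)).re := by
  rw [aeval_kpoly_re, aeval_kpoly_re]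
  refine sum_re_eq n ω _ _ fun i hi' => ?_
  rcases hi' with h | h <;> rw [h]
  · exact if_congr h0 rfl rfl
  · exact if_congr h2 rfl rfl

lemma kpoly_im_eq (n : ℕ) (lo hi : ℕ → ℝ) (S T : Finset ℕ) (ω : ℝ)
    (h1 : 1 ∈ S ↔ 1 ∈ T) (h3 : 3 ∈ S ↔ 3 ∈ T) :
    (Polynomial.aeval ((ω:ℂ)*Complex.I) (kpoly n lo hi S)).im =
      (Polynomial.aeval ((ω:ℂ)*Complex.I) (kpoly n lo hi T)).im := by
  rw [aeval_kpoly_im, aeval_kpoly_im]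
  refine sum_im_eq n ω _ _ fun i hi' => ?_
  rcases hi' with h | h <;> rw [h]
  · exact if_congr h1 rfl rfl
  · exact if_congr h3 rfl rfl

lemma kpoly_re_le (n : ℕ) (lo hi : ℕ → ℝ) (S : Finset ℕ) (ω : ℝ) (hω : 0 ≤ ω)
    (p : ℝ[X]) (hp : p ∈ intervalFamily lo hi) (hd : p.natDegree ≤ n)
    (h0 : 0 ∉ S) (h2 : 2 ∈ S) :
    (Polynomial.aeval ((ω:ℂ)*Complex.I) (kpoly n lo hi S)).re ≤
      (Polynomial.aeval ((ω:ℂ)*Complex.I) p).re := by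
  rw [aeval_kpoly_re, aeval_re n p hd]
  refine sum_re_le n ω hω _ _ (fun i h => ?_) (fun i h => ?_) <;> rw [h]
  · rw [if_neg h0]; exact (hp i).1
  · rw [if_pos h2]; exact (hp i).2

lemma kpoly_re_ge (n : ℕ) (lo hi : ℕ → ℝ) (S : Finset ℕ) (ω : ℝ) (hω : 0 ≤ ω)
    (p : ℝ[X]) (hp : p ∈ intervalFamily lo hi) (hd : p.natDegree ≤ n)
    (h0 : 0 ∈ S) (h2 : 2 ∉ S) :
    (Polynomial.aeval ((ω:ℂ)*Complex.I) p).re ≤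
      (Polynomial.aeval ((ω:ℂ)*Complex.I) (kpoly n lo hi S)).re := by
  rw [aeval_kpoly_re, aeval_re n p hd]
  refine sum_re_le n ω hω _ _ (fun i h => ?_) (fun i h => ?_) <;> rw [h]
  · rw [if_pos h0]; exact (hp i).2
  · rw [if_neg h2]; exact (hp i).1

lemma kpoly_im_le (n : ℕ) (lo hi : ℕ → ℝ) (S : Finset ℕ) (ω : ℝ) (hω : 0 ≤ ω)
    (p : ℝ[X]) (hp : p ∈ intervalFamily lo hi) (hd : p.natDegree ≤ n)
    (h1 : 1 ∉ S) (h3 : 3 ∈ S) :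
    (Polynomial.aeval ((ω:ℂ)*Complex.I) (kpoly n lo hi S)).im ≤
      (Polynomial.aeval ((ω:ℂ)*Complex.I) p).im := by
  rw [aeval_kpoly_im, aeval_im n p hd]
  refine sum_im_le n ω hω _ _ (fun i h => ?_) (fun i h => ?_) <;> rw [h]
  · rw [if_neg h1]; exact (hp i).1
  · rw [if_pos h3]; exact (hp i).2

lemma kpoly_im_ge (n : ℕ) (lo hi : ℕ → ℝ) (S : Finset ℕ) (ω : ℝ) (hω : 0 ≤ ω)
    (p : ℝ[X]) (hp : p ∈ intervalFamily lo hi) (hd : p.natDegree ≤ n)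
    (h1 : 1 ∈ S) (h3 : 3 ∉ S) :
    (Polynomial.aeval ((ω:ℂ)*Complex.I) p).im ≤
      (Polynomial.aeval ((ω:ℂ)*Complex.I) (kpoly n lo hi S)).im := by
  rw [aeval_kpoly_im, aeval_im n p hd]
  refine sum_im_le n ω hω _ _ (fun i h => ?_) (fun i h => ?_) <;> rw [h]
  · rw [if_pos h1]; exact (hp i).2
  · rw [if_neg h3]; exact (hp i).1

lemma div_re_pos_imp {x y : ℂ} (h : 0 < (x/y).re) : 0 < x.re*y.re + x.im*y.im := by
  by_cases hy : y = 0
  · rw [hy, div_zero] at h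
    simp at h
  · have hn : 0 < Complex.normSq y := Complex.normSq_pos.2 hy
    rw [Complex.div_re, ← add_div] at h
    have := mul_pos h hn
    rwa [div_mul_cancel₀ _ (ne_of_gt hn)] at this

lemma div_re_pos_of {x y : ℂ} (hy : y ≠ 0) (h : 0 < x.re*y.re + x.im*y.im) :
    0 < (x/y).re := by
  have hn : 0 < Complex.normSq y := Complex.normSq_pos.2 hy
  rw [Complex.div_re, ← add_div]
  exact div_pos h hn

lemma conj_eval (p : ℝ[X]) (ω : ℝ) :
    Polynomial.aeval ((ω:ℂ)*Complex.I) p =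
      (starRingEnd ℂ) (Polynomial.aeval (((-ω:ℝ):ℂ)*Complex.I) p) := by
  rw [← Polynomial.aeval_conj]
  congr 1
  rw [map_mul, Complex.conj_ofReal, Complex.conj_I]
  push_cast
  ring

lemma family_convex (lo hi : ℕ → ℝ) (p q : ℝ[X]) (hp : p ∈ intervalFamily lo hi)
    (hq : q ∈ intervalFamily lo hi) (t : ℝ) (ht : t ∈ Set.Icc (0:ℝ) 1) :
    (1-t) • p + t • q ∈ intervalFamily lo hi := by
  intro i
  obtain ⟨h1, h2⟩ := hp i
  obtain ⟨h3, h4⟩ := hq i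
  obtain ⟨ht0, ht1⟩ := ht
  rw [Polynomial.coeff_add, Polynomial.coeff_smul, Polynomial.coeff_smul,
    smul_eq_mul, smul_eq_mul]
  constructor <;> nlinarith

end IntervalSPR

open IntervalSPR in
/-- Every member of the interval transfer function family `Γ_u / Γ_v` is strictly positive
real iff the eight vertex transfer functions
`K₁ᵘ/K₄ᵛ, K₂ᵘ/K₃ᵛ, K₃ᵘ/K₁ᵛ, K₄ᵘ/K₂ᵛ, K₁ᵘ/K₃ᵛ, K₂ᵘ/K₄ᵛ, K₃ᵘ/K₂ᵛ, K₄ᵘ/K₁ᵛ` are. -/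
theorem interval_spr_eight_vertices (nu nv : ℕ) (lou hiu lov hiv : ℕ → ℝ)
    (hleu : ∀ i, lou i ≤ hiu i) (hlev : ∀ i, lov i ≤ hiv i)
    (hbu : ∀ i, nu < i → lou i = 0 ∧ hiu i = 0)
    (hbv : ∀ i, nv < i → lov i = 0 ∧ hiv i = 0)
    (hnn : nu ≤ nv)
    (hleadu : 0 < lou nu) (hleadv : 0 < lov nv) :
    (∀ pu ∈ intervalFamily lou hiu, ∀ pv ∈ intervalFamily lov hiv, SPR pu pv) ↔
      (SPR (kvert nu lou hiu 0) (kvert nv lov hiv 3) ∧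
       SPR (kvert nu lou hiu 1) (kvert nv lov hiv 2) ∧
       SPR (kvert nu lou hiu 2) (kvert nv lov hiv 0) ∧
       SPR (kvert nu lou hiu 3) (kvert nv lov hiv 1) ∧
       SPR (kvert nu lou hiu 0) (kvert nv lov hiv 2) ∧
       SPR (kvert nu lou hiu 1) (kvert nv lov hiv 3) ∧
       SPR (kvert nu lou hiu 2) (kvert nv lov hiv 1) ∧
       SPR (kvert nu lou hiu 3) (kvert nv lov hiv 0)) := by
  constructor
  · intro h
    refine ⟨?_, ?_, ?_, ?_, ?_, ?_, ?_, ?_⟩ <;>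
      exact h _ (kpoly_mem _ _ _ _ hleu hbu) _ (kpoly_mem _ _ _ _ hlev hbv)
  · rintro ⟨H14, H23, H31, H42, H13, H24, H32, H41⟩
    -- key positivity of Re(pu(jω) * conj (pv(jω))) for all members
    have KEYpos : ∀ ω : ℝ, 0 ≤ ω → ∀ pu ∈ intervalFamily lou hiu,
        ∀ pv ∈ intervalFamily lov hiv,
        0 < (Polynomial.aeval ((ω:ℂ)*Complex.I) pu).re *
              (Polynomial.aeval ((ω:ℂ)*Complex.I) pv).re +
            (Polynomial.aeval ((ω:ℂ)*Complex.I) pu).im *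
              (Polynomial.aeval ((ω:ℂ)*Complex.I) pv).im := by
      intro ω hω pu hpu pv hpv
      have hdu : pu.natDegree ≤ nu := mem_natDegree_le nu lou hiu pu hpu hbu
      have hdv : pv.natDegree ≤ nv := mem_natDegree_le nv lov hiv pv hpv hbv
      -- corner coincidences for u
      have hure2 : (Polynomial.aeval ((ω:ℂ)*Complex.I) (kvert nu lou hiu 2)).re =
          (Polynomial.aeval ((ω:ℂ)*Complex.I) (kvert nu lou hiu 1)).re :=
        kpoly_re_eq nu lou hiu (kRes 2) (kRes 1) ω (by decide) (by decide)
      have huim2 : (Polynomial.aeval ((ω:ℂ)*Complex.I) (kvert nu lou hiu 2)).im =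
          (Polynomial.aeval ((ω:ℂ)*Complex.I) (kvert nu lou hiu 0)).im :=
        kpoly_im_eq nu lou hiu (kRes 2) (kRes 0) ω (by decide) (by decide)
      have hure3 : (Polynomial.aeval ((ω:ℂ)*Complex.I) (kvert nu lou hiu 3)).re =
          (Polynomial.aeval ((ω:ℂ)*Complex.I) (kvert nu lou hiu 0)).re :=
        kpoly_re_eq nu lou hiu (kRes 3) (kRes 0) ω (by decide) (by decide)
      have huim3 : (Polynomial.aeval ((ω:ℂ)*Complex.I) (kvert nu lou hiu 3)).im =
          (Polynomial.aeval ((ω:ℂ)*Complex.I) (kvert nu lou hiu 1)).im :=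
        kpoly_im_eq nu lou hiu (kRes 3) (kRes 1) ω (by decide) (by decide)
      -- corner coincidences for v
      have hvre2 : (Polynomial.aeval ((ω:ℂ)*Complex.I) (kvert nv lov hiv 2)).re =
          (Polynomial.aeval ((ω:ℂ)*Complex.I) (kvert nv lov hiv 1)).re :=
        kpoly_re_eq nv lov hiv (kRes 2) (kRes 1) ω (by decide) (by decide)
      have hvim2 : (Polynomial.aeval ((ω:ℂ)*Complex.I) (kvert nv lov hiv 2)).im =
          (Polynomial.aeval ((ω:ℂ)*Complex.I) (kvert nv lov hiv 0)).im :=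
        kpoly_im_eq nv lov hiv (kRes 2) (kRes 0) ω (by decide) (by decide)
      have hvre3 : (Polynomial.aeval ((ω:ℂ)*Complex.I) (kvert nv lov hiv 3)).re =
          (Polynomial.aeval ((ω:ℂ)*Complex.I) (kvert nv lov hiv 0)).re :=
        kpoly_re_eq nv lov hiv (kRes 3) (kRes 0) ω (by decide) (by decide)
      have hvim3 : (Polynomial.aeval ((ω:ℂ)*Complex.I) (kvert nv lov hiv 3)).im =
          (Polynomial.aeval ((ω:ℂ)*Complex.I) (kvert nv lov hiv 1)).im :=
        kpoly_im_eq nv lov hiv (kRes 3) (kRes 1) ω (by decide) (by decide)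
      -- the eight corner inequalities
      have n14 := div_re_pos_imp (H14.2 ω)
      have n23 := div_re_pos_imp (H23.2 ω)
      have n31 := div_re_pos_imp (H31.2 ω)
      have n42 := div_re_pos_imp (H42.2 ω)
      have n13 := div_re_pos_imp (H13.2 ω)
      have n24 := div_re_pos_imp (H24.2 ω)
      have n32 := div_re_pos_imp (H32.2 ω)
      have n41 := div_re_pos_imp (H41.2 ω)
      rw [hvre3, hvim3] at n14
      rw [hvre2, hvim2] at n23
      rw [hure2, huim2] at n31
      rw [hure3, huim3] at n42
      rw [hvre2, hvim2] at n13
      rw [hvre3, hvim3] at n24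
      rw [hure2, huim2] at n32
      rw [hure3, huim3] at n41
      -- rectangle bounds
      refine rect_pos _ _ _ _ _ _ _ _ _ _ _ _ n14 n13 n41 n42 n31 n32 n24 n23
        (kpoly_re_le nu lou hiu (kRes 0) ω hω pu hpu hdu (by decide) (by decide))
        (kpoly_re_ge nu lou hiu (kRes 1) ω hω pu hpu hdu (by decide) (by decide))
        (kpoly_im_le nu lou hiu (kRes 0) ω hω pu hpu hdu (by decide) (by decide))
        (kpoly_im_ge nu lou hiu (kRes 1) ω hω pu hpu hdu (by decide) (by decide))
        (kpoly_re_le nv lov hiv (kRes 0) ω hω pv hpv hdv (by decide) (by decide))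
        (kpoly_re_ge nv lov hiv (kRes 1) ω hω pv hpv hdv (by decide) (by decide))
        (kpoly_im_le nv lov hiv (kRes 0) ω hω pv hpv hdv (by decide) (by decide))
        (kpoly_im_ge nv lov hiv (kRes 1) ω hω pv hpv hdv (by decide) (by decide))
    have KEY : ∀ ω : ℝ, ∀ pu ∈ intervalFamily lou hiu, ∀ pv ∈ intervalFamily lov hiv,
        0 < (Polynomial.aeval ((ω:ℂ)*Complex.I) pu).re *
              (Polynomial.aeval ((ω:ℂ)*Complex.I) pv).re +
            (Polynomial.aeval ((ω:ℂ)*Complex.I) pu).im *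
              (Polynomial.aeval ((ω:ℂ)*Complex.I) pv).im := by
      intro ω pu hpu pv hpv
      rcases le_or_gt 0 ω with hω | hω
      · exact KEYpos ω hω pu hpu pv hpv
      · have h := KEYpos (-ω) (by linarith) pu hpu pv hpv
        have e1 := conj_eval pu ω
        have e2 := conj_eval pv ω
        rw [e1, e2]
        simp only [Complex.conj_re, Complex.conj_im]
        push_cast at h ⊢
        nlinarith [h]
    have NOZ : ∀ pv ∈ intervalFamily lov hiv, ∀ ω : ℝ,
        Polynomial.aeval ((ω:ℂ)*Complex.I) pv ≠ 0 := by
      intro pv hpv ω h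
      have hk := KEY ω _ (kpoly_mem nu lou hiu (kRes 0) hleu hbu) pv hpv
      rw [h] at hk
      simp at hk
    intro pu hpu pv hpv
    have HUR : Hurwitz pv := by
      refine hurwitz_path nv (kvert nv lov hiv 0) pv (kpoly_natDegree_le _ _ _ _)
        (mem_natDegree_le nv lov hiv pv hpv hbv) ?_ ?_ H31.1 ?_
      · exact lt_of_lt_of_le hleadv ((kpoly_mem nv lov hiv (kRes 0) hlev hbv) nv).1
      · exact lt_of_lt_of_le hleadv (hpv nv).1
      · intro t ht ω
        exact NOZ _ (family_convex lov hiv _ pv (kpoly_mem nv lov hiv _ hlev hbv) hpv t ht) ω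
    exact ⟨HUR, fun ω => div_re_pos_of (NOZ pv hpv ω) (KEY ω pu hpu pv hpv)⟩
end

section
/- Let g and f be real polynomials with deg g < deg f and with f + g Hurwitz stable. Then the sensitivity function S = f/(f+g) satisfies ‖S‖_∞ = sup_{ω∈ℝ} |f(jω)/(f(jω)+g(jω))| ≥ 1. -/
open Polynomial

/-- The H∞ norm of the sensitivity function `S = f/(f+g)`:
`‖S‖_∞ = sup_{ω ∈ ℝ} |f(jω)/(f(jω)+g(jω))|`. -/
noncomputable def sensNorm (f g : ℝ[X]) : ℝ :=
  ⨆ ω : ℝ, ‖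
    (Polynomial.aeval ((ω : ℂ) * Complex.I) f /
      (Polynomial.aeval ((ω : ℂ) * Complex.I) f + Polynomial.aeval ((ω : ℂ) * Complex.I) g))‖

open Filter Complex in
/-- Basic bound: for `‖z‖ ≥ 1`, `‖p(z)‖ ≤ (∑ |coeffs|) * ‖z‖ ^ k` when `natDegree p < k+1`. -/
lemma aeval_norm_le_aux (p : ℝ[X]) (k : ℕ) (hk : p.natDegree < k + 1) (z : ℂ) (hz : 1 ≤ ‖z‖) :
    ‖(Polynomial.aeval z p : ℂ)‖ ≤ (∑ i ∈ Finset.range (k + 1), |p.coeff i|) * ‖z‖ ^ k := by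
  rw [Polynomial.aeval_eq_sum_range' hk]
  refine (norm_sum_le _ _).trans ?_
  rw [Finset.sum_mul]
  refine Finset.sum_le_sum fun i hi => ?_
  rw [norm_smul, norm_pow, Real.norm_eq_abs]
  have hik : i ≤ k := Nat.lt_succ_iff.mp (Finset.mem_range.mp hi)
  have := pow_le_pow_right₀ hz hik
  exact mul_le_mul_of_nonneg_left this (abs_nonneg _)

open Filter Complex in
/-- For real polynomials `g`, `f` with `deg g < deg f` and `f + g` Hurwitz stable, the
sensitivity function `S = f/(f+g)` satisfies `‖S‖_∞ ≥ 1`. -/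
theorem sensitivity_norm_ge_one (g f : ℝ[X])
    (hdeg : g.natDegree < f.natDegree) (hH : Hurwitz (f + g)) :
    1 ≤ sensNorm f g := by
  classical
  set q : ℝ[X] := f + g with hq
  have hfne : f ≠ 0 := by
    intro h; rw [h] at hdeg; simp at hdeg
  have hdd : g.degree < f.degree := by
    rcases eq_or_ne g 0 with h0 | h0
    · rw [h0, degree_zero]
      exact bot_lt_iff_ne_bot.mpr (fun h => hfne (degree_eq_bot.mp h))
    · exact (natDegree_lt_natDegree_iff h0).mp hdeg
  have hqdeg : q.degree = f.degree := by
    rw [hq]; exact degree_add_eq_left_of_degree_lt hdd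
  have hqne : q ≠ 0 := by
    intro h; rw [h, degree_zero] at hqdeg
    exact hfne (degree_eq_bot.mp hqdeg.symm)
  set n : ℕ := q.natDegree with hn
  have hnf : n = f.natDegree := natDegree_eq_of_degree_eq hqdeg
  have hn1 : 1 ≤ n := by omega
  -- the denominator never vanishes on the imaginary axis
  have hD : ∀ ω : ℝ, (Polynomial.aeval ((ω : ℂ) * Complex.I) q : ℂ) ≠ 0 := by
    intro ω h
    have := hH _ h
    simp at this
  -- the function under the supremum
  set hfun : ℝ → ℝ := fun ω => ‖
    (Polynomial.aeval ((ω : ℂ) * Complex.I) f / Polynomial.aeval ((ω : ℂ) * Complex.I) q)‖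
    with hfun_def
  have hsens : sensNorm f g = ⨆ ω : ℝ, hfun ω := by
    unfold sensNorm
    congr 1
    funext ω
    rw [hfun_def]
    congr 2
    rw [hq, map_add]
  -- continuity
  have hpath : Continuous fun ω : ℝ => (ω : ℂ) * Complex.I :=
    Complex.continuous_ofReal.mul continuous_const
  have hcontf : Continuous fun ω : ℝ => (Polynomial.aeval ((ω : ℂ) * Complex.I) f : ℂ) :=
    (Polynomial.continuous_aeval f).comp hpath
  have hcontq : Continuous fun ω : ℝ => (Polynomial.aeval ((ω : ℂ) * Complex.I) q : ℂ) :=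
    (Polynomial.continuous_aeval q).comp hpath
  have hcont : Continuous hfun :=
    continuous_norm.comp (hcontf.div hcontq hD)
  -- evenness
  have hconj : ∀ (p : ℝ[X]) (ω : ℝ),
      (Polynomial.aeval (((-ω : ℝ) : ℂ) * Complex.I) p : ℂ) =
        (starRingEnd ℂ) (Polynomial.aeval ((ω : ℂ) * Complex.I) p) := by
    intro p ω
    rw [← Polynomial.aeval_conj]
    congr 1
    simp [Complex.ext_iff]
  have heven : ∀ ω : ℝ, hfun (-ω) = hfun ω := by
    intro ω
    rw [hfun_def]
    simp only
    rw [show ((-ω : ℝ) : ℂ) = ((-ω : ℝ) : ℂ) from rfl]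
    rw [hconj f ω, hconj q ω, ← map_div₀ (starRingEnd ℂ), Complex.norm_conj]
  -- the error term r
  set r : ℝ → ℝ := fun ω => ‖(Polynomial.aeval ((ω : ℂ) * Complex.I) g)‖ /
    ‖(Polynomial.aeval ((ω : ℂ) * Complex.I) q)‖ with hr_def
  -- constants
  set Cg : ℝ := ∑ i ∈ Finset.range ((n - 1) + 1), |g.coeff i| with hCg
  set E : ℝ[X] := q.eraseLead with hE
  set CE : ℝ := ∑ i ∈ Finset.range ((n - 1) + 1), |E.coeff i| with hCE
  set a : ℝ := |q.leadingCoeff| with ha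
  have ha0 : 0 < a := abs_pos.mpr (leadingCoeff_ne_zero.mpr hqne)
  have hnorm_path : ∀ ω : ℝ, ‖(ω : ℂ) * Complex.I‖ = |ω| := by
    intro ω
    rw [norm_mul, Complex.norm_real, Complex.norm_I, mul_one, Real.norm_eq_abs]
  -- numerator bound
  have hBnum : ∀ ω : ℝ, 1 ≤ ω →
      ‖(Polynomial.aeval ((ω : ℂ) * Complex.I) g)‖ ≤ Cg * ω ^ (n - 1) := by
    intro ω hω
    have hz : 1 ≤ ‖(ω : ℂ) * Complex.I‖ := by rw [hnorm_path]; rw [_root_.abs_of_nonneg (by linarith)]; exact hω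
    have := aeval_norm_le_aux g (n - 1) (by omega) _ hz
    rw [hnorm_path, _root_.abs_of_nonneg (by linarith : (0:ℝ) ≤ ω)] at this
    simpa using this
  -- denominator bound
  have hDden : ∀ ω : ℝ, 1 ≤ ω →
      ω ^ (n - 1) * (a * ω - CE) ≤
        ‖(Polynomial.aeval ((ω : ℂ) * Complex.I) q)‖ := by
    intro ω hω
    set z : ℂ := (ω : ℂ) * Complex.I with hz_def
    have hz : 1 ≤ ‖z‖ := by rw [hnorm_path]; rw [_root_.abs_of_nonneg (by linarith)]; exact hω
    have hsplit : (Polynomial.aeval z q : ℂ) =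
        Polynomial.aeval z E + (q.leadingCoeff : ℂ) * z ^ n := by
      conv_lhs => rw [← q.eraseLead_add_C_mul_X_pow]
      rw [map_add, map_mul, map_pow, Polynomial.aeval_C, Polynomial.aeval_X]
      rfl
    have hlead : ‖(q.leadingCoeff : ℂ) * z ^ n‖ = a * ω ^ n := by
      rw [norm_mul, norm_pow, Complex.norm_real, Real.norm_eq_abs, hnorm_path,
        _root_.abs_of_nonneg (by linarith : (0:ℝ) ≤ ω)]
    have hEbound : ‖(Polynomial.aeval z E : ℂ)‖ ≤ CE * ω ^ (n - 1) := by
      have hEdeg : E.natDegree < (n - 1) + 1 := by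
        have h5 : E.natDegree ≤ n - 1 := by rw [hE, hn]; exact q.eraseLead_natDegree_le
        omega
      have := aeval_norm_le_aux E (n - 1) hEdeg z hz
      rwa [hnorm_path, _root_.abs_of_nonneg (by linarith : (0:ℝ) ≤ ω)] at this
    have h1 : a * ω ^ n - CE * ω ^ (n - 1) ≤ ‖(Polynomial.aeval z q : ℂ)‖ := by
      rw [hsplit]
      have hkey : ‖(q.leadingCoeff : ℂ) * z ^ n‖ - ‖(Polynomial.aeval z E : ℂ)‖ ≤
          ‖(Polynomial.aeval z E : ℂ) + (q.leadingCoeff : ℂ) * z ^ n‖ := by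
        have h3 := norm_sub_norm_le ((q.leadingCoeff : ℂ) * z ^ n) (-(Polynomial.aeval z E : ℂ))
        rw [norm_neg, sub_neg_eq_add, add_comm] at h3
        exact h3
      have := sub_le_sub (le_of_eq hlead.symm) hEbound
      linarith
    have h2 : ω ^ (n - 1) * (a * ω - CE) = a * ω ^ n - CE * ω ^ (n - 1) := by
      have hpow : ω ^ n = ω ^ (n - 1) * ω := by
        rw [← pow_succ]
        congr 1
        omega
      rw [hpow]; ring
    rw [h2]
    simpa using h1
  -- r tends to 0 at atTop
  have hr0 : Tendsto r atTop (nhds 0) := by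
    have htail : Tendsto (fun ω : ℝ => Cg / (a * ω - CE)) atTop (nhds 0) := by
      apply Tendsto.div_atTop (tendsto_const_nhds)
      apply Filter.tendsto_atTop_add_const_right
      exact (tendsto_const_mul_atTop_of_pos ha0).mpr tendsto_id
    have hlow : ∀ᶠ ω in atTop, 0 ≤ r ω :=
      Filter.Eventually.of_forall fun ω => div_nonneg (norm_nonneg _) (norm_nonneg _)
    have hup : ∀ᶠ ω in atTop, r ω ≤ Cg / (a * ω - CE) := by
      filter_upwards [eventually_ge_atTop (1 : ℝ),
        eventually_ge_atTop ((CE + 1) / a)] with ω hω1 hω2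
      have hpos : 0 < a * ω - CE := by
        have : CE + 1 ≤ a * ω := by
          rw [div_le_iff₀ ha0] at hω2
          linarith [hω2]
        linarith
      have hωpos : (0:ℝ) < ω := by linarith
      have hppos : 0 < ω ^ (n - 1) := pow_pos hωpos _
      have hdenpos : 0 < ω ^ (n - 1) * (a * ω - CE) := mul_pos hppos hpos
      have hstep : r ω ≤ (ω ^ (n - 1) * Cg) / (ω ^ (n - 1) * (a * ω - CE)) := by
        rw [hr_def]
        apply div_le_div₀ (by positivity)
        · exact (hBnum ω hω1).trans_eq (mul_comm _ _)
        · exact hdenpos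
        · exact hDden ω hω1
      rw [mul_div_mul_left _ _ (ne_of_gt hppos)] at hstep
      exact hstep
    exact tendsto_of_tendsto_of_tendsto_of_le_of_le' tendsto_const_nhds htail hlow hup
  -- hfun tends to 1 at atTop
  have habs_div : ∀ ω : ℝ, hfun ω =
      ‖(Polynomial.aeval ((ω : ℂ) * Complex.I) f)‖ /
      ‖(Polynomial.aeval ((ω : ℂ) * Complex.I) q)‖ := by
    intro ω
    rw [hfun_def]
    simp only
    rw [norm_div]
  have hbnd : ∀ ω : ℝ, |hfun ω - 1| ≤ r ω := by
    intro ω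
    set A : ℂ := Polynomial.aeval ((ω : ℂ) * Complex.I) f with hA
    set D : ℂ := Polynomial.aeval ((ω : ℂ) * Complex.I) q with hD'
    set B : ℂ := Polynomial.aeval ((ω : ℂ) * Complex.I) g with hB
    have hADB : A - D = -B := by
      rw [hA, hD', hB, hq, map_add]
      ring
    have hDpos : 0 < ‖D‖ := norm_pos_iff.mpr (hD ω)
    have h1 : hfun ω - 1 = (‖A‖ - ‖D‖) / ‖D‖ := by
      rw [habs_div ω, hA, hD', sub_div, div_self (ne_of_gt hDpos)]
    rw [h1, _root_.abs_div, _root_.abs_of_pos hDpos]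
    have h3 : |‖A‖ - ‖D‖| ≤ ‖B‖ := by
      have h4 := abs_norm_sub_norm_le A D
      rw [hADB, norm_neg] at h4
      simpa using h4
    have h5 : r ω = ‖B‖ / ‖D‖ := rfl
    rw [h5]
    exact (div_le_div_iff_of_pos_right hDpos).mpr h3
  have htop : Tendsto hfun atTop (nhds 1) := by
    rw [← tendsto_sub_nhds_zero_iff]
    apply squeeze_zero_norm (fun ω => ?_) hr0
    simpa [Real.norm_eq_abs] using hbnd ω
  have hcoco : Tendsto hfun (cocompact ℝ) (nhds 1) := by
    rw [cocompact_eq_atBot_atTop, tendsto_sup]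
    constructor
    · have : Tendsto (fun ω : ℝ => hfun (-ω)) atBot (nhds 1) :=
        htop.comp tendsto_neg_atBot_atTop
      simpa [heven] using this
    · exact htop
  -- boundedness
  have hbdd : BddAbove (Set.range hfun) := by
    have h2 : ∀ᶠ ω in cocompact ℝ, hfun ω ≤ 2 :=
      hcoco.eventually (eventually_le_nhds (by norm_num : (1:ℝ) < 2))
    rw [Filter.eventually_iff] at h2
    obtain ⟨K, hK, hKsub⟩ := Filter.mem_cocompact.mp h2
    obtain ⟨M, hM⟩ := (hK.image hcont).bddAbove
    refine ⟨max M 2, ?_⟩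
    rintro y ⟨ω, rfl⟩
    by_cases hωK : ω ∈ K
    · exact le_max_of_le_left (hM (Set.mem_image_of_mem hfun hωK))
    · exact le_max_of_le_right (hKsub hωK)
  -- conclude
  rw [hsens]
  refine le_of_tendsto htop (Filter.Eventually.of_forall fun ω => le_ciSup hbdd ω)
end
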